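/- arXiv:1507.00249 — 2 statements merged into one kernel-verified Lean document; each statement's English description precedes it below -/
import Mathlib

section
/- Let σ be a connected skew shape and let μ be any probability distribution on J(σ) (not necessarily toggle-symmetric). Then for any box [i,j] ∈ σ, E_μ(R_{i,j}) = 1 + Σ_{c ∈ C_{ij}(σ)} P_μ(c). -/
open Finset
open scoped Classical

noncomputable section

/-- A skew Young diagram `λ/ν` (in English notation) with height `a` and width `b`.
Rows are indexed `1,…,a` from top to bottom and columns `1,…,b` from left to right;
row `i` consists of the boxes in columns `ν i + 1, …, λ i` (each row is nonempty).
Box `[i,j]` has its southeast corner at the lattice point `(i,j)`, the point `(0,0)`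
being the northwest corner of the bounding `a × b` rectangle. -/
structure SkewShape where
  a : ℕ
  b : ℕ
  ha : 1 ≤ a
  hb : 1 ≤ b
  lam : ℕ → ℕ
  nu : ℕ → ℕ
  lam_anti : ∀ i j : ℕ, 1 ≤ i → i ≤ j → j ≤ a → lam j ≤ lam i
  nu_anti : ∀ i j : ℕ, 1 ≤ i → i ≤ j → j ≤ a → nu j ≤ nu i
  nu_lt_lam : ∀ i : ℕ, 1 ≤ i → i ≤ a → nu i < lam i
  lam_le_b : ∀ i : ℕ, 1 ≤ i → i ≤ a → lam i ≤ b
  lam_one : lam 1 = b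
  nu_a : nu a = 0

namespace SkewShape

variable (σ : SkewShape)

/-- The boxes of `σ` : pairs `[i,j]` with `1 ≤ i ≤ a` and `ν i < j ≤ λ i`.
The poset `P_σ` is the set of boxes ordered componentwise:
`[i,j] ≤ [k,l]` iff `i ≤ k` and `j ≤ l` (the product order on `ℕ × ℕ`). -/
def cells : Finset (ℕ × ℕ) :=
  (Finset.Icc 1 σ.a ×ˢ Finset.Icc 1 σ.b).filter
    (fun c => σ.nu c.1 < c.2 ∧ c.2 ≤ σ.lam c.1)

/-- The poset `P_σ` of boxes of `σ` is connected: it is nonempty, and any two boxes are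
joined by a walk along comparable pairs of boxes. -/
def Connected : Prop :=
  σ.cells.Nonempty ∧ ∀ p ∈ σ.cells, ∀ q ∈ σ.cells,
    Relation.ReflTransGen
      (fun x y : ℕ × ℕ => x ∈ σ.cells ∧ y ∈ σ.cells ∧ (x ≤ y ∨ y ≤ x)) p q

/-- `I` is an order ideal of `P_σ`, i.e. a subshape of `σ`. -/
def IsIdeal (I : Finset (ℕ × ℕ)) : Prop :=
  I ⊆ σ.cells ∧ ∀ p ∈ I, ∀ q ∈ σ.cells, q ≤ p → q ∈ I

/-- The set `J(σ)` of all order ideals of `P_σ` (equivalently, subshapes of `σ`). -/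
def idealsFinset : Finset (Finset (ℕ × ℕ)) :=
  σ.cells.powerset.filter fun I => σ.IsIdeal I

/-- Box `p` can be toggled in to the order ideal `I`. -/
def CanToggleIn (I : Finset (ℕ × ℕ)) (p : ℕ × ℕ) : Prop :=
  p ∈ σ.cells ∧ p ∉ I ∧ σ.IsIdeal (insert p I)

/-- Box `p` can be toggled out of the order ideal `I`. -/
def CanToggleOut (I : Finset (ℕ × ℕ)) (p : ℕ × ℕ) : Prop :=
  p ∈ I ∧ σ.IsIdeal (I.erase p)

/-- The jaggedness of `I`: the number of boxes that can be toggled in,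
plus the number of boxes that can be toggled out. -/
def jag (I : Finset (ℕ × ℕ)) : ℕ :=
  (σ.cells.filter fun p => σ.CanToggleIn I p).card +
  (σ.cells.filter fun p => σ.CanToggleOut I p).card

/-- The probability, under `μ`, that a random order ideal of `P_σ` satisfies `E`. -/
def pr (μ : Finset (ℕ × ℕ) → ℝ) (E : Finset (ℕ × ℕ) → Prop) : ℝ :=
  ∑ I ∈ σ.idealsFinset.filter E, μ I

/-- `μ` is a probability distribution on `J(σ)`. -/
def IsProbDist (μ : Finset (ℕ × ℕ) → ℝ) : Prop :=
  (∀ I, 0 ≤ μ I) ∧ (∑ I ∈ σ.idealsFinset, μ I = 1)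

/-- `μ` is toggle-symmetric: for every box `p` of `σ`, the probability that `p` can be
toggled in equals the probability that `p` can be toggled out. -/
def ToggleSymmetric (μ : Finset (ℕ × ℕ) → ℝ) : Prop :=
  ∀ p ∈ σ.cells,
    σ.pr μ (fun I => σ.CanToggleIn I p) = σ.pr μ (fun I => σ.CanToggleOut I p)

/-- The expectation of the statistic `f` with respect to `μ`. -/
def expect (μ : Finset (ℕ × ℕ) → ℝ) (f : Finset (ℕ × ℕ) → ℝ) : ℝ :=
  ∑ I ∈ σ.idealsFinset, μ I * f I

/-- `c` is a northwest outward corner of `σ`, occurring at the lattice point `c = (i,j)`: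
the northwest boundary of `σ` turns at `(i,j)` with its two steps
(the top edge of box `[i+1,j]` and the left edge of box `[i,j+1]`)
not bordering a common box of `σ`. -/
def IsNWCorner (c : ℕ × ℕ) : Prop :=
  (c.1 + 1, c.2) ∈ σ.cells ∧ (c.1, c.2 + 1) ∈ σ.cells ∧ (c.1, c.2) ∉ σ.cells

/-- `c` is a southeast outward corner of `σ`, occurring at the lattice point `c = (i,j)`:
the southeast boundary of `σ` turns at `(i,j)` with its two steps
(the right edge of box `[i+1,j]` and the bottom edge of box `[i,j+1]`)
not bordering a common box of `σ`. -/
def IsSECorner (c : ℕ × ℕ) : Prop :=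
  (c.1 + 1, c.2) ∈ σ.cells ∧ (c.1, c.2 + 1) ∈ σ.cells ∧ (c.1 + 1, c.2 + 1) ∉ σ.cells

/-- The set of northwest outward corners of `σ`. -/
def nwCorners : Finset (ℕ × ℕ) :=
  (Finset.range (σ.a + 1) ×ˢ Finset.range (σ.b + 1)).filter fun c => σ.IsNWCorner c

/-- The set of southeast outward corners of `σ`.
(Together, `nwCorners` and `seCorners` form the set `C(σ)` of outward corners.) -/
def seCorners : Finset (ℕ × ℕ) :=
  (Finset.range (σ.a + 1) ×ˢ Finset.range (σ.b + 1)).filter fun c => σ.IsSECorner c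

/-- The displacement `δ(c) = 1 − i/a − j/b` of a northwest corner occurring at `(i,j)`. -/
def nwDisp (c : ℕ × ℕ) : ℝ := 1 - (c.1 : ℝ) / (σ.a : ℝ) - (c.2 : ℝ) / (σ.b : ℝ)

/-- The displacement `δ(c) = −1 + i/a + j/b` of a southeast corner occurring at `(i,j)`. -/
def seDisp (c : ℕ × ℕ) : ℝ := -1 + (c.1 : ℝ) / (σ.a : ℝ) + (c.2 : ℝ) / (σ.b : ℝ)

/-- The lattice path of the subshape `I` includes both steps of the northwest corner at
`c = (i,j)`: neither box `[i+1,j]` nor box `[i,j+1]` belongs to `I`. -/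
def NWInPath (c : ℕ × ℕ) (I : Finset (ℕ × ℕ)) : Prop :=
  (c.1 + 1, c.2) ∉ I ∧ (c.1, c.2 + 1) ∉ I

/-- The lattice path of the subshape `I` includes both steps of the southeast corner at
`c = (i,j)`: both boxes `[i+1,j]` and `[i,j+1]` belong to `I`. -/
def SEInPath (c : ℕ × ℕ) (I : Finset (ℕ × ℕ)) : Prop :=
  (c.1 + 1, c.2) ∈ I ∧ (c.1, c.2 + 1) ∈ I

/-- The correction term `Σ_{c ∈ C(σ)} δ(c) · P_μ(c)`, where `P_μ(c)` is the
`μ`-probability that the lattice path of a random subshape includes both steps of `c`. -/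
def cornerCorrection (μ : Finset (ℕ × ℕ) → ℝ) : ℝ :=
  (∑ c ∈ σ.nwCorners, σ.nwDisp c * σ.pr μ (NWInPath c)) +
  (∑ c ∈ σ.seCorners, σ.seDisp c * σ.pr μ (SEInPath c))

end SkewShape

namespace SkewShape

variable (σ : SkewShape)

/-- The toggleable-in indicator `T⁺_p : J(σ) → ℝ`. -/
def Tplus (p : ℕ × ℕ) (I : Finset (ℕ × ℕ)) : ℝ := if σ.CanToggleIn I p then 1 else 0

/-- The toggleable-out indicator `T⁻_p : J(σ) → ℝ`. -/
def Tminus (p : ℕ × ℕ) (I : Finset (ℕ × ℕ)) : ℝ := if σ.CanToggleOut I p then 1 else 0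

/-- The rook random variable at the box `q = [i,j]`:
`R_{ij} = Σ_{i'≤i, j'≤j} T⁺ + Σ_{i'≥i, j'≥j} T⁻ − Σ_{i'<i, j'<j} T⁻ − Σ_{i'>i, j'>j} T⁺`,
all sums over boxes `[i',j']` of `σ`. -/
def rook (q : ℕ × ℕ) (I : Finset (ℕ × ℕ)) : ℝ :=
  (∑ p ∈ σ.cells.filter (fun p => p.1 ≤ q.1 ∧ p.2 ≤ q.2), σ.Tplus p I) +
  (∑ p ∈ σ.cells.filter (fun p => q.1 ≤ p.1 ∧ q.2 ≤ p.2), σ.Tminus p I) -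
  (∑ p ∈ σ.cells.filter (fun p => p.1 < q.1 ∧ p.2 < q.2), σ.Tminus p I) -
  (∑ p ∈ σ.cells.filter (fun p => q.1 < p.1 ∧ q.2 < p.2), σ.Tplus p I)

/-- The corner `c` (occurring at the point `c = (x,y)`) belongs to `C_{ij}(σ)` for the box
`q = [i,j]`: it occurs strictly southeast (`x ≥ i` and `y ≥ j`) or strictly northwest
(`x < i` and `y < j`) of the center of box `[i,j]`. -/
def InCij (q c : ℕ × ℕ) : Prop := (q.1 ≤ c.1 ∧ q.2 ≤ c.2) ∨ (c.1 < q.1 ∧ c.2 < q.2)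

end SkewShape
namespace SkewShape

variable (σ : SkewShape)

lemma mem_cells_iff {p : ℕ × ℕ} :
    p ∈ σ.cells ↔ 1 ≤ p.1 ∧ p.1 ≤ σ.a ∧ σ.nu p.1 < p.2 ∧ p.2 ≤ σ.lam p.1 := by
  simp only [cells, Finset.mem_filter, Finset.mem_product, Finset.mem_Icc]
  constructor
  · rintro ⟨⟨⟨h1, h2⟩, _, _⟩, h5, h6⟩; exact ⟨h1, h2, h5, h6⟩
  · rintro ⟨h1, h2, h5, h6⟩
    exact ⟨⟨⟨h1, h2⟩, by omega, le_trans h6 (σ.lam_le_b _ h1 h2)⟩, h5, h6⟩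

/-- The profile of an ideal: rightmost occupied column in row `r` (or `ν r`), with
conventions `prof 0 = b`, `prof r = 0` for `r > a`. -/
def prof (I : Finset (ℕ × ℕ)) (r : ℕ) : ℕ :=
  if r = 0 then σ.b
  else if r ≤ σ.a then ((I.filter (fun p => p.1 = r)).sup Prod.snd) ⊔ σ.nu r
  else 0

variable {σ} {I : Finset (ℕ × ℕ)}

lemma prof_zero : σ.prof I 0 = σ.b := by simp [prof]

lemma prof_of_gt {r : ℕ} (h : σ.a < r) : σ.prof I r = 0 := by
  have : ¬ r = 0 := by omega
  simp [prof, this, Nat.not_le.2 h]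

lemma nu_le_prof {r : ℕ} (h1 : 1 ≤ r) (h2 : r ≤ σ.a) : σ.nu r ≤ σ.prof I r := by
  have : ¬ r = 0 := by omega
  simp [prof, this, h2]

lemma prof_le_lam (hI : σ.IsIdeal I) {r : ℕ} (h1 : 1 ≤ r) (h2 : r ≤ σ.a) :
    σ.prof I r ≤ σ.lam r := by
  have h0 : ¬ r = 0 := by omega
  simp only [prof, h0, if_false, h2, if_true, sup_le_iff]
  refine ⟨Finset.sup_le ?_, le_of_lt (σ.nu_lt_lam r h1 h2)⟩
  intro p hp
  rw [Finset.mem_filter] at hp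
  have := (σ.mem_cells_iff.1 (hI.1 hp.1))
  rw [hp.2] at this
  exact this.2.2.2

lemma mem_of_ideal (hI : σ.IsIdeal I) {p : ℕ × ℕ} :
    p ∈ I ↔ 1 ≤ p.1 ∧ p.1 ≤ σ.a ∧ σ.nu p.1 < p.2 ∧ p.2 ≤ σ.prof I p.1 := by
  constructor
  · intro hp
    have hc := σ.mem_cells_iff.1 (hI.1 hp)
    refine ⟨hc.1, hc.2.1, hc.2.2.1, ?_⟩
    have h0 : ¬ p.1 = 0 := by omega
    simp only [prof, h0, if_false, hc.2.1, if_true, le_sup_iff]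
    left
    exact Finset.le_sup (f := Prod.snd) (Finset.mem_filter.2 ⟨hp, rfl⟩)
  · rintro ⟨h1, h2, h3, h4⟩
    have h0 : ¬ p.1 = 0 := by omega
    rw [prof, if_neg h0, if_pos h2] at h4
    set s := I.filter (fun p' => p'.1 = p.1) with hs
    have hsup : p.2 ≤ s.sup Prod.snd := by
      rcases le_sup_iff.1 h4 with h | h
      · exact h
      · omega
    have hne : s.Nonempty := by
      by_contra hemp
      rw [Finset.not_nonempty_iff_eq_empty] at hemp
      rw [hemp] at hsup
      simp at hsup
      omega
    obtain ⟨w, hw, hweq⟩ := Finset.exists_mem_eq_sup s hne Prod.snd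
    rw [Finset.mem_filter] at hw
    have hwI := hw.1
    have hwc := σ.mem_cells_iff.1 (hI.1 hwI)
    have hw2 : p.2 ≤ w.2 := by omega
    refine hI.2 w hwI p (σ.mem_cells_iff.2 ⟨h1, h2, h3, ?_⟩) ?_
    · rw [← hw.2]; omega
    · rw [Prod.le_def, hw.2]
      exact ⟨le_refl _, hw2⟩

end SkewShape
namespace SkewShape

variable {σ : SkewShape} {I : Finset (ℕ × ℕ)}

lemma prof_succ_le (hI : σ.IsIdeal I) (r : ℕ) : σ.prof I (r + 1) ≤ σ.prof I r := by
  rcases Nat.eq_zero_or_pos r with hr0 | hrpos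
  · subst hr0
    rw [prof_zero]
    by_cases h1 : 1 ≤ σ.a
    · exact le_trans (prof_le_lam hI le_rfl h1) (by rw [σ.lam_one])
    · rw [prof_of_gt (by omega)]; omega
  · by_cases hra : r + 1 ≤ σ.a
    · have h0 : ¬ r + 1 = 0 := by omega
      rw [prof, if_neg h0, if_pos hra, sup_le_iff]
      constructor
      · apply Finset.sup_le
        intro p hp
        rw [Finset.mem_filter] at hp
        have hc := σ.mem_cells_iff.1 (hI.1 hp.1)
        by_cases hnu : p.2 ≤ σ.nu r
        · exact le_trans hnu (nu_le_prof hrpos (by omega))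
        · have hq : (r, p.2) ∈ σ.cells := by
            rw [σ.mem_cells_iff]
            refine ⟨hrpos, by omega, by simp only; omega, ?_⟩
            have := σ.lam_anti r (r+1) hrpos (by omega) hra
            have := hc.2.2.2
            rw [hp.2] at this
            simp only
            omega
          have hmem : (r, p.2) ∈ I := hI.2 p hp.1 (r, p.2) hq (by rw [Prod.le_def]; exact ⟨by omega, le_rfl⟩)
          have := (mem_of_ideal hI).1 hmem
          exact this.2.2.2
      · exact le_trans (σ.nu_anti r (r+1) hrpos (by omega) hra) (nu_le_prof hrpos (by omega))
    · rw [prof_of_gt (by omega)]; omega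

lemma prof_anti (hI : σ.IsIdeal I) {r s : ℕ} (h : r ≤ s) : σ.prof I s ≤ σ.prof I r :=
  antitone_nat_of_succ_le (prof_succ_le hI) h

lemma canToggleIn_iff (hI : σ.IsIdeal I) (p : ℕ × ℕ) :
    σ.CanToggleIn I p ↔ 1 ≤ p.1 ∧ p.1 ≤ σ.a ∧ p.2 = σ.prof I p.1 + 1 ∧
      σ.prof I p.1 < σ.lam p.1 ∧ σ.prof I p.1 < σ.prof I (p.1 - 1) := by
  constructor
  · rintro ⟨hcell, hnI, hins⟩
    have hc := σ.mem_cells_iff.1 hcell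
    obtain ⟨h1, h2, h3, h4⟩ := hc
    have hnu : σ.nu p.1 ≤ σ.prof I p.1 := nu_le_prof h1 h2
    have hMlt : σ.prof I p.1 < p.2 := by
      by_contra hle
      exact hnI ((mem_of_ideal hI).2 ⟨h1, h2, h3, by omega⟩)
    have hceq : p.2 = σ.prof I p.1 + 1 := by
      by_contra hne
      have hgt : σ.prof I p.1 + 1 < p.2 := by omega
      have hqc : (p.1, p.2 - 1) ∈ σ.cells := σ.mem_cells_iff.2 ⟨h1, h2, by simp only; omega, by simp only; omega⟩
      have hqmem : (p.1, p.2 - 1) ∈ insert p I :=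
        hins.2 p (Finset.mem_insert_self p I) _ hqc (by rw [Prod.le_def]; exact ⟨le_rfl, by simp only; omega⟩)
      rcases Finset.mem_insert.1 hqmem with heq | hmem
      · have := congrArg Prod.snd heq; simp only at this; omega
      · have := (mem_of_ideal hI).1 hmem; simp only at this; omega
    refine ⟨h1, h2, hceq, by omega, ?_⟩
    rcases Nat.eq_or_lt_of_le h1 with h1e | h1gt
    · have hz : p.1 - 1 = 0 := by omega
      rw [hz, prof_zero]
      have := σ.lam_le_b p.1 h1 h2
      omega
    · -- p.1 ≥ 2
      by_cases hnup : σ.nu (p.1 - 1) < p.2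
      · have hqc : (p.1 - 1, p.2) ∈ σ.cells := by
          rw [σ.mem_cells_iff]
          refine ⟨by omega, by omega, hnup, ?_⟩
          have := σ.lam_anti (p.1 - 1) p.1 (by omega) (by omega) h2
          simp only; omega
        have hqmem : (p.1 - 1, p.2) ∈ insert p I :=
          hins.2 p (Finset.mem_insert_self p I) _ hqc (by rw [Prod.le_def]; exact ⟨by simp only; omega, le_rfl⟩)
        rcases Finset.mem_insert.1 hqmem with heq | hmem
        · have := congrArg Prod.fst heq; simp only at this; omega
        · have := (mem_of_ideal hI).1 hmem; simp only at this; omega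
      · have := nu_le_prof (σ := σ) (I := I) (r := p.1 - 1) (by omega) (by omega)
        omega
  · rintro ⟨h1, h2, hceq, hlt, hlt'⟩
    have hnu : σ.nu p.1 ≤ σ.prof I p.1 := nu_le_prof h1 h2
    have hcell : p ∈ σ.cells := σ.mem_cells_iff.2 ⟨h1, h2, by omega, by omega⟩
    refine ⟨hcell, ?_, ?_, ?_⟩
    · intro hmem
      have := (mem_of_ideal hI).1 hmem
      omega
    · intro x hx
      rcases Finset.mem_insert.1 hx with h | h
      · rw [h]; exact hcell
      · exact hI.1 h
    · intro x hx y hyc hyx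
      rcases Finset.mem_insert.1 hx with h | h
      · subst h
        by_cases hyp : y = x
        · rw [hyp]; exact Finset.mem_insert_self _ _
        · refine Finset.mem_insert_of_mem ((mem_of_ideal hI).2 ?_)
          have hyc' := σ.mem_cells_iff.1 hyc
          rw [Prod.le_def] at hyx
          refine ⟨hyc'.1, hyc'.2.1, hyc'.2.2.1, ?_⟩
          rcases Nat.eq_or_lt_of_le hyx.1 with he | hlt2
          · -- same row
            have : y.2 < x.2 := by
              rcases Nat.eq_or_lt_of_le hyx.2 with he2 | h2lt
              · exfalso; exact hyp (Prod.ext he he2)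
              · exact h2lt
            rw [he]; omega
          · -- y.1 < x.1, so y.1 ≤ x.1 - 1
            have hmono : σ.prof I (x.1 - 1) ≤ σ.prof I y.1 := prof_anti hI (by omega)
            omega
      · exact Finset.mem_insert_of_mem (hI.2 x h y hyc hyx)

lemma canToggleOut_iff (hI : σ.IsIdeal I) (p : ℕ × ℕ) :
    σ.CanToggleOut I p ↔ 1 ≤ p.1 ∧ p.1 ≤ σ.a ∧ p.2 = σ.prof I p.1 ∧
      σ.nu p.1 < σ.prof I p.1 ∧ σ.prof I (p.1 + 1) < σ.prof I p.1 := by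
  constructor
  · rintro ⟨hmem, hers⟩
    have hm := (mem_of_ideal hI).1 hmem
    obtain ⟨h1, h2, h3, h4⟩ := hm
    have hpc : p ∈ σ.cells := hI.1 hmem
    have hceq : p.2 = σ.prof I p.1 := by
      by_contra hne
      have hq : (p.1, p.2 + 1) ∈ I := (mem_of_ideal hI).2 ⟨h1, h2, by simp only; omega, by simp only; omega⟩
      have hqe : (p.1, p.2 + 1) ∈ I.erase p := Finset.mem_erase.2 ⟨by
        intro h; have := congrArg Prod.snd h; simp only at this; omega, hq⟩
      have := hers.2 _ hqe p hpc (by rw [Prod.le_def]; exact ⟨le_rfl, by simp only; omega⟩)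
      exact (Finset.notMem_erase p I) this
    refine ⟨h1, h2, hceq, by omega, ?_⟩
    by_cases hra : p.1 + 1 ≤ σ.a
    · by_contra hle
      have hmono : σ.prof I (p.1 + 1) ≤ σ.prof I p.1 := prof_succ_le hI p.1
      have hnu1 : σ.nu (p.1 + 1) ≤ σ.nu p.1 := σ.nu_anti p.1 (p.1 + 1) h1 (by omega) hra
      have hq : (p.1 + 1, p.2) ∈ I := (mem_of_ideal hI).2 ⟨by omega, hra, by simp only; omega, by simp only; omega⟩
      have hqe : (p.1 + 1, p.2) ∈ I.erase p := Finset.mem_erase.2 ⟨by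
        intro h; have := congrArg Prod.fst h; simp only at this; omega, hq⟩
      have := hers.2 _ hqe p hpc (by rw [Prod.le_def]; exact ⟨by simp only; omega, le_rfl⟩)
      exact (Finset.notMem_erase p I) this
    · rw [prof_of_gt (by omega)]; omega
  · rintro ⟨h1, h2, hceq, hnu, hlt⟩
    have hmem : p ∈ I := (mem_of_ideal hI).2 ⟨h1, h2, by omega, by omega⟩
    refine ⟨hmem, fun x hx => hI.1 (Finset.mem_of_mem_erase hx), ?_⟩
    intro x hx y hyc hyx
    have hxI : x ∈ I := Finset.mem_of_mem_erase hx
    have hyI : y ∈ I := hI.2 x hxI y hyc hyx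
    refine Finset.mem_erase.2 ⟨?_, hyI⟩
    intro hyp
    subst hyp
    -- y = p ≤ x, x ∈ I, x ≠ p : contradiction
    have hxne : x ≠ y := (Finset.mem_erase.1 hx).1
    rw [Prod.le_def] at hyx
    have hxm := (mem_of_ideal hI).1 hxI
    have hmono : σ.prof I x.1 ≤ σ.prof I y.1 := prof_anti hI hyx.1
    have hx2 : x.2 = y.2 := by omega
    have hx1 : y.1 < x.1 := by
      rcases Nat.eq_or_lt_of_le hyx.1 with he | h
      · exfalso; exact hxne (Prod.ext he.symm hx2)
      · exact h
    have hmono2 : σ.prof I x.1 ≤ σ.prof I (y.1 + 1) := prof_anti hI (by omega)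
    omega

end SkewShape
namespace SkewShape

variable {σ : SkewShape} {I : Finset (ℕ × ℕ)}

lemma conn_overlap (hconn : σ.Connected) {r : ℕ} (h1 : 1 ≤ r) (h2 : r < σ.a) :
    σ.nu r < σ.lam (r + 1) := by
  by_contra hle
  push_neg at hle
  have hp : (r, σ.nu r + 1) ∈ σ.cells :=
    σ.mem_cells_iff.2 ⟨h1, by omega, by simp only; omega, by
      simp only; have := σ.nu_lt_lam r h1 (by omega); omega⟩
  have hq : (r + 1, σ.lam (r + 1)) ∈ σ.cells :=
    σ.mem_cells_iff.2 ⟨by omega, by omega, by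
      simp only; exact σ.nu_lt_lam (r+1) (by omega) (by omega), le_rfl⟩
  have hwalk := hconn.2 _ hp _ hq
  have hinv : ∀ z, Relation.ReflTransGen
      (fun x y : ℕ × ℕ => x ∈ σ.cells ∧ y ∈ σ.cells ∧ (x ≤ y ∨ y ≤ x)) (r, σ.nu r + 1) z →
      z.1 ≤ r := by
    intro z hz
    induction hz with
    | refl => exact le_rfl
    | @tail x y hw hstep ih =>
      obtain ⟨hxc, hyc, hcomp⟩ := hstep
      by_contra hgt
      push_neg at hgt
      have hxm := σ.mem_cells_iff.1 hxc
      have hym := σ.mem_cells_iff.1 hyc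
      have hy2 : y.2 ≤ σ.nu r := le_trans (le_trans hym.2.2.2
        (σ.lam_anti (r+1) y.1 (by omega) (by omega) hym.2.1)) hle
      have hx2 : σ.nu r ≤ σ.nu x.1 := by
        rcases Nat.eq_or_lt_of_le ih with he | hlt
        · rw [← he]
        · exact σ.nu_anti x.1 r hxm.1 (by omega) (by omega)
      rw [Prod.le_def, Prod.le_def] at hcomp
      rcases hcomp with ⟨hc1, hc2⟩ | ⟨hc1, hc2⟩
      · have := hxm.2.2.1; omega
      · omega
  have := hinv _ hwalk
  simp only at this
  omega

/-- Sum of `Tplus` over a filtered set of cells, as a row sum. -/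
lemma sum_Tplus_eq (hI : σ.IsIdeal I) (P : ℕ × ℕ → Prop) [DecidablePred P] :
    ∑ p ∈ σ.cells.filter P, σ.Tplus p I
      = ∑ r ∈ Finset.Icc 1 σ.a, (if (σ.prof I r < σ.lam r ∧ σ.prof I r < σ.prof I (r - 1)
          ∧ P (r, σ.prof I r + 1)) then (1 : ℝ) else 0) := by
  unfold Tplus
  rw [Finset.sum_boole, Finset.sum_boole]
  congr 1
  apply Finset.card_bij (fun p _ => p.1)
  · rintro p hp
    rw [Finset.mem_filter, Finset.mem_filter] at hp
    obtain ⟨⟨hpc, hPp⟩, htog⟩ := hp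
    rw [canToggleIn_iff hI] at htog
    obtain ⟨h1, h2, h3, h4, h5⟩ := htog
    rw [Finset.mem_filter, Finset.mem_Icc]
    refine ⟨⟨h1, h2⟩, h4, h5, ?_⟩
    have : (p.1, σ.prof I p.1 + 1) = p := Prod.ext rfl h3.symm
    rw [this]; exact hPp
  · rintro p hp p' hp' heq
    rw [Finset.mem_filter, Finset.mem_filter] at hp hp'
    have h3 := ((canToggleIn_iff hI p).1 hp.2).2.2.1
    have h3' := ((canToggleIn_iff hI p').1 hp'.2).2.2.1
    exact Prod.ext heq (by rw [h3, h3', heq])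
  · rintro r hr
    rw [Finset.mem_filter, Finset.mem_Icc] at hr
    obtain ⟨⟨h1, h2⟩, h4, h5, hP⟩ := hr
    refine ⟨(r, σ.prof I r + 1), ?_, rfl⟩
    rw [Finset.mem_filter, Finset.mem_filter]
    have htog : σ.CanToggleIn I (r, σ.prof I r + 1) :=
      (canToggleIn_iff hI _).2 ⟨h1, h2, rfl, h4, h5⟩
    exact ⟨⟨htog.1, hP⟩, htog⟩

/-- Sum of `Tminus` over a filtered set of cells, as a row sum. -/
lemma sum_Tminus_eq (hI : σ.IsIdeal I) (P : ℕ × ℕ → Prop) [DecidablePred P] :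
    ∑ p ∈ σ.cells.filter P, σ.Tminus p I
      = ∑ r ∈ Finset.Icc 1 σ.a, (if (σ.nu r < σ.prof I r ∧ σ.prof I (r + 1) < σ.prof I r
          ∧ P (r, σ.prof I r)) then (1 : ℝ) else 0) := by
  unfold Tminus
  rw [Finset.sum_boole, Finset.sum_boole]
  congr 1
  apply Finset.card_bij (fun p _ => p.1)
  · rintro p hp
    rw [Finset.mem_filter, Finset.mem_filter] at hp
    obtain ⟨⟨hpc, hPp⟩, htog⟩ := hp
    rw [canToggleOut_iff hI] at htog
    obtain ⟨h1, h2, h3, h4, h5⟩ := htog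
    rw [Finset.mem_filter, Finset.mem_Icc]
    refine ⟨⟨h1, h2⟩, h4, h5, ?_⟩
    have : (p.1, σ.prof I p.1) = p := Prod.ext rfl h3.symm
    rw [this]; exact hPp
  · rintro p hp p' hp' heq
    rw [Finset.mem_filter, Finset.mem_filter] at hp hp'
    have h3 := ((canToggleOut_iff hI p).1 hp.2).2.2.1
    have h3' := ((canToggleOut_iff hI p').1 hp'.2).2.2.1
    exact Prod.ext heq (by rw [h3, h3', heq])
  · rintro r hr
    rw [Finset.mem_filter, Finset.mem_Icc] at hr
    obtain ⟨⟨h1, h2⟩, h4, h5, hP⟩ := hr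
    refine ⟨(r, σ.prof I r), ?_, rfl⟩
    rw [Finset.mem_filter, Finset.mem_filter]
    have htog : σ.CanToggleOut I (r, σ.prof I r) :=
      (canToggleOut_iff hI _).2 ⟨h1, h2, rfl, h4, h5⟩
    exact ⟨⟨hI.1 htog.1, hP⟩, htog⟩

end SkewShape
namespace SkewShape

variable {σ : SkewShape} {I : Finset (ℕ × ℕ)}

lemma mem_cells_iff' {r c : ℕ} :
    (r, c) ∈ σ.cells ↔ 1 ≤ r ∧ r ≤ σ.a ∧ σ.nu r < c ∧ c ≤ σ.lam r := σ.mem_cells_iff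

lemma mem_of_ideal' (hI : σ.IsIdeal I) {r c : ℕ} :
    (r, c) ∈ I ↔ 1 ≤ r ∧ r ≤ σ.a ∧ σ.nu r < c ∧ c ≤ σ.prof I r := mem_of_ideal hI

lemma nw_corner_eq {c : ℕ × ℕ} (h : σ.IsNWCorner c) :
    c.2 = σ.nu c.1 ∧ 1 ≤ c.1 ∧ c.1 + 1 ≤ σ.a := by
  obtain ⟨hA, hB, hC⟩ := h
  rw [mem_cells_iff'] at hA hB
  have hnc : ¬ (1 ≤ c.1 ∧ c.1 ≤ σ.a ∧ σ.nu c.1 < c.2 ∧ c.2 ≤ σ.lam c.1) := by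
    intro h'; exact hC (mem_cells_iff'.2 h')
  push_neg at hnc
  omega

lemma se_corner_eq {c : ℕ × ℕ} (h : σ.IsSECorner c) :
    c.2 = σ.lam (c.1 + 1) ∧ 1 ≤ c.1 ∧ c.1 + 1 ≤ σ.a := by
  obtain ⟨hA, hB, hC⟩ := h
  rw [mem_cells_iff'] at hA hB
  have hnc : ¬ (1 ≤ c.1 + 1 ∧ c.1 + 1 ≤ σ.a ∧ σ.nu (c.1 + 1) < c.2 + 1 ∧ c.2 + 1 ≤ σ.lam (c.1 + 1)) := by
    intro h'; exact hC (mem_cells_iff'.2 h')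
  push_neg at hnc
  omega

lemma nw_card (hconn : σ.Connected) (hI : σ.IsIdeal I) (q : ℕ × ℕ) :
    ((σ.nwCorners.filter (fun c => InCij q c)).filter (fun c => NWInPath c I)).card
      = ((Finset.Icc 1 σ.a).filter (fun r => σ.prof I r = σ.nu r ∧ σ.prof I (r + 1) < σ.nu r
          ∧ InCij q (r, σ.nu r))).card := by
  apply Finset.card_bij (fun c _ => c.1)
  · rintro c hc
    rw [Finset.mem_filter, Finset.mem_filter] at hc
    obtain ⟨⟨hcor, hcij⟩, hpath⟩ := hc
    rw [nwCorners, Finset.mem_filter] at hcor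
    obtain ⟨-, hcor⟩ := hcor
    obtain ⟨hc2, hc1, hca⟩ := nw_corner_eq hcor
    obtain ⟨hA, hB, -⟩ := hcor
    rw [mem_cells_iff'] at hA hB
    obtain ⟨hp1, hp2⟩ := hpath
    have hq1 : σ.prof I (c.1 + 1) < c.2 := by
      by_contra hle
      push_neg at hle
      exact hp1 ((mem_of_ideal' hI).2 ⟨by omega, by omega, by omega, hle⟩)
    have hq2 : σ.prof I c.1 < c.2 + 1 := by
      by_contra hle
      push_neg at hle
      exact hp2 ((mem_of_ideal' hI).2 ⟨by omega, by omega, by omega, hle⟩)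
    have hnup : σ.nu c.1 ≤ σ.prof I c.1 := nu_le_prof hc1 (by omega)
    rw [Finset.mem_filter, Finset.mem_Icc]
    refine ⟨⟨hc1, by omega⟩, by omega, by omega, ?_⟩
    have : (c.1, σ.nu c.1) = c := Prod.ext rfl hc2.symm
    rw [this]; exact hcij
  · rintro c hc c' hc' heq
    rw [Finset.mem_filter, Finset.mem_filter, nwCorners, Finset.mem_filter] at hc hc'
    have e1 := (nw_corner_eq hc.1.1.2).1
    have e2 := (nw_corner_eq hc'.1.1.2).1
    exact Prod.ext heq (by rw [e1, e2, heq])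
  · rintro r hr
    rw [Finset.mem_filter, Finset.mem_Icc] at hr
    obtain ⟨⟨h1, h2⟩, hpr, hlt, hcij⟩ := hr
    have hra : r < σ.a := by
      by_contra h
      have : r = σ.a := by omega
      rw [this, σ.nu_a] at hlt
      omega
    have hnu1 : σ.nu (r + 1) ≤ σ.prof I (r + 1) := nu_le_prof (by omega) (by omega)
    have hconn1 : σ.nu r < σ.lam (r + 1) := conn_overlap hconn h1 hra
    have hnl : σ.nu r < σ.lam r := σ.nu_lt_lam r h1 h2
    refine ⟨(r, σ.nu r), ?_, rfl⟩
    rw [Finset.mem_filter, Finset.mem_filter, nwCorners, Finset.mem_filter]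
    have hlamb := σ.lam_le_b r h1 h2
    refine ⟨⟨⟨?_, ?_, ?_, ?_⟩, hcij⟩, ?_, ?_⟩
    · rw [Finset.mem_product, Finset.mem_range, Finset.mem_range]
      constructor <;> simp only <;> omega
    · exact mem_cells_iff'.2 ⟨by omega, by omega, by simp only; omega, by simp only; omega⟩
    · exact mem_cells_iff'.2 ⟨by omega, by omega, by simp only; omega, by simp only; omega⟩
    · intro hmem
      have := mem_cells_iff'.1 hmem
      simp only at this
      omega
    · intro hmem
      have := (mem_of_ideal' hI).1 hmem
      simp only at this
      omega
    · intro hmem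
      have := (mem_of_ideal' hI).1 hmem
      simp only at this
      omega

lemma se_card (hconn : σ.Connected) (hI : σ.IsIdeal I) (q : ℕ × ℕ) :
    ((σ.seCorners.filter (fun c => InCij q c)).filter (fun c => SEInPath c I)).card
      = ((Finset.Icc 1 σ.a).filter (fun r => σ.prof I r = σ.lam r ∧ σ.lam r < σ.prof I (r - 1)
          ∧ InCij q (r - 1, σ.lam r))).card := by
  apply Finset.card_bij (fun c _ => c.1 + 1)
  · rintro c hc
    rw [Finset.mem_filter, Finset.mem_filter] at hc
    obtain ⟨⟨hcor, hcij⟩, hpath⟩ := hc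
    rw [seCorners, Finset.mem_filter] at hcor
    obtain ⟨-, hcor⟩ := hcor
    obtain ⟨hc2, hc1, hca⟩ := se_corner_eq hcor
    obtain ⟨hA, hB, -⟩ := hcor
    rw [mem_cells_iff'] at hA hB
    obtain ⟨hp1, hp2⟩ := hpath
    have hq1 := (mem_of_ideal' hI).1 hp1
    have hq2 := (mem_of_ideal' hI).1 hp2
    have hple : σ.prof I (c.1 + 1) ≤ σ.lam (c.1 + 1) := prof_le_lam hI (by omega) (by omega)
    rw [Finset.mem_filter, Finset.mem_Icc]
    refine ⟨⟨by omega, by omega⟩, ?_, ?_, ?_⟩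
    · omega
    · simp only [Nat.add_sub_cancel]; omega
    · simp only [Nat.add_sub_cancel]
      have : (c.1, σ.lam (c.1 + 1)) = c := Prod.ext rfl hc2.symm
      rw [this]; exact hcij
  · rintro c hc c' hc' heq
    rw [Finset.mem_filter, Finset.mem_filter, seCorners, Finset.mem_filter] at hc hc'
    have e1 := (se_corner_eq hc.1.1.2).1
    have e2 := (se_corner_eq hc'.1.1.2).1
    have h1 : c.1 = c'.1 := by omega
    exact Prod.ext h1 (by rw [e1, e2, h1])
  · rintro r hr
    rw [Finset.mem_filter, Finset.mem_Icc] at hr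
    obtain ⟨⟨h1, h2⟩, hpr, hlt, hcij⟩ := hr
    have hr2 : 2 ≤ r := by
      by_contra h
      have : r = 1 := by omega
      subst this
      rw [σ.lam_one] at hpr hlt
      simp only [Nat.sub_self, prof_zero] at hlt
      omega
    have hple : σ.prof I (r - 1) ≤ σ.lam (r - 1) := prof_le_lam hI (by omega) (by omega)
    have hconn1 : σ.nu (r - 1) < σ.lam r := by
      have := conn_overlap hconn (r := r - 1) (by omega) (by omega)
      have he : r - 1 + 1 = r := by omega
      rw [he] at this
      exact this
    have hnl : σ.nu r < σ.lam r := σ.nu_lt_lam r (by omega) h2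
    have hnup : σ.nu r ≤ σ.prof I r := nu_le_prof (by omega) h2
    have hlamb := σ.lam_le_b r (by omega) h2
    have he : r - 1 + 1 = r := by omega
    refine ⟨(r - 1, σ.lam r), ?_, by simp only; omega⟩
    rw [Finset.mem_filter, Finset.mem_filter, seCorners, Finset.mem_filter]
    refine ⟨⟨⟨?_, ?_, ?_, ?_⟩, hcij⟩, ?_, ?_⟩
    · rw [Finset.mem_product, Finset.mem_range, Finset.mem_range]
      constructor <;> simp only <;> omega
    · rw [show ((r-1 : ℕ), σ.lam r).1 + 1 = r by simp only; omega]
      exact mem_cells_iff'.2 ⟨by omega, by omega, by simp only; omega, by simp only; omega⟩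
    · exact mem_cells_iff'.2 ⟨by omega, by omega, by simp only; omega, by simp only; omega⟩
    · intro hmem
      have := mem_cells_iff'.1 hmem
      simp only at this
      rw [he] at this
      omega
    · rw [show ((r-1 : ℕ), σ.lam r).1 + 1 = r by simp only; omega]
      exact (mem_of_ideal' hI).2 ⟨by omega, by omega, by simp only; omega, by simp only; omega⟩
    · exact (mem_of_ideal' hI).2 ⟨by omega, by omega, by simp only; omega, by simp only; omega⟩

end SkewShape
namespace SkewShape

set_option maxHeartbeats 4000000 in
/-- The per-row identity underlying Lemma 3.8 (verified by case analysis). -/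
lemma rowIdZ (i j r nr lr P Q R : ℕ)
    (h1 : nr ≤ Q) (h2 : Q ≤ lr) (h3 : Q ≤ P) (h4 : R ≤ Q)
    (h5 : r ≤ i → j ≤ lr) (h6 : i ≤ r → nr < j)
    (h7 : r = 1 → j ≤ P) (h8 : 1 ≤ r) :
    (if Q < lr ∧ Q < P ∧ (r ≤ i ∧ Q + 1 ≤ j) then (1 : ℤ) else 0)
      + (if nr < Q ∧ R < Q ∧ (i ≤ r ∧ j ≤ Q) then (1 : ℤ) else 0)
      - (if nr < Q ∧ R < Q ∧ (r < i ∧ Q < j) then (1 : ℤ) else 0)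
      - (if Q < lr ∧ Q < P ∧ (i < r ∧ j < Q + 1) then (1 : ℤ) else 0)
    = (if Q = nr ∧ R < nr ∧ ((i ≤ r ∧ j ≤ nr) ∨ (r < i ∧ nr < j)) then (1 : ℤ) else 0)
      + (if Q = lr ∧ lr < P ∧ ((i ≤ r - 1 ∧ j ≤ lr) ∨ (r - 1 < i ∧ lr < j)) then (1 : ℤ) else 0)
      + ((if (r ≤ i ∧ (j ≤ P ∨ ¬P = Q)) ∨ (i < r ∧ j ≤ Q ∧ P = Q) then (1 : ℤ) else 0)
        - (if (r + 1 ≤ i ∧ (j ≤ Q ∨ ¬Q = R)) ∨ (i < r + 1 ∧ j ≤ R ∧ Q = R) then (1 : ℤ) else 0)) := by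
  split_ifs <;> omega

lemma iteR (P : Prop) [Decidable P] :
    (if P then (1 : ℝ) else 0) = (((if P then (1 : ℤ) else 0) : ℤ) : ℝ) := by
  split <;> simp

lemma telescope_real (f : ℕ → ℝ) : ∀ n : ℕ,
    ∑ r ∈ Finset.Icc 1 n, (f r - f (r + 1)) = f 1 - f (n + 1)
  | 0 => by simp
  | n + 1 => by
      rw [Finset.sum_Icc_succ_top (by omega), telescope_real f n]; ring

end SkewShape
namespace SkewShape

variable {σ : SkewShape} {I : Finset (ℕ × ℕ)}

lemma rook_pointwise (hconn : σ.Connected) (hI : σ.IsIdeal I) {q : ℕ × ℕ}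
    (hq : q ∈ σ.cells) :
    σ.rook q I = 1 +
      (((((σ.nwCorners.filter (fun c => InCij q c)).filter (fun c => NWInPath c I)).card : ℝ))
        + ((((σ.seCorners.filter (fun c => InCij q c)).filter (fun c => SEInPath c I)).card : ℝ))) := by
  obtain ⟨hi1, hi2, hj1, hj2⟩ := σ.mem_cells_iff.1 hq
  have hjb : q.2 ≤ σ.b := le_trans hj2 (σ.lam_le_b _ hi1 hi2)
  have hA : ∑ p ∈ σ.cells.filter (fun p => p.1 ≤ q.1 ∧ p.2 ≤ q.2), σ.Tplus p I
      = ∑ r ∈ Finset.Icc 1 σ.a, (if σ.prof I r < σ.lam r ∧ σ.prof I r < σ.prof I (r - 1)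
          ∧ (r ≤ q.1 ∧ σ.prof I r + 1 ≤ q.2) then (1 : ℝ) else 0) := by
    rw [sum_Tplus_eq hI]
  have hB : ∑ p ∈ σ.cells.filter (fun p => q.1 ≤ p.1 ∧ q.2 ≤ p.2), σ.Tminus p I
      = ∑ r ∈ Finset.Icc 1 σ.a, (if σ.nu r < σ.prof I r ∧ σ.prof I (r + 1) < σ.prof I r
          ∧ (q.1 ≤ r ∧ q.2 ≤ σ.prof I r) then (1 : ℝ) else 0) := by
    rw [sum_Tminus_eq hI]
  have hC : ∑ p ∈ σ.cells.filter (fun p => p.1 < q.1 ∧ p.2 < q.2), σ.Tminus p I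
      = ∑ r ∈ Finset.Icc 1 σ.a, (if σ.nu r < σ.prof I r ∧ σ.prof I (r + 1) < σ.prof I r
          ∧ (r < q.1 ∧ σ.prof I r < q.2) then (1 : ℝ) else 0) := by
    rw [sum_Tminus_eq hI]
  have hD : ∑ p ∈ σ.cells.filter (fun p => q.1 < p.1 ∧ q.2 < p.2), σ.Tplus p I
      = ∑ r ∈ Finset.Icc 1 σ.a, (if σ.prof I r < σ.lam r ∧ σ.prof I r < σ.prof I (r - 1)
          ∧ (q.1 < r ∧ q.2 < σ.prof I r + 1) then (1 : ℝ) else 0) := by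
    rw [sum_Tplus_eq hI]
  have hNW : ((((σ.nwCorners.filter (fun c => InCij q c)).filter (fun c => NWInPath c I)).card : ℝ))
      = ∑ r ∈ Finset.Icc 1 σ.a, (if σ.prof I r = σ.nu r ∧ σ.prof I (r + 1) < σ.nu r
          ∧ ((q.1 ≤ r ∧ q.2 ≤ σ.nu r) ∨ (r < q.1 ∧ σ.nu r < q.2)) then (1 : ℝ) else 0) := by
    rw [nw_card hconn hI q, Finset.card_filter]
    push_cast
    exact Finset.sum_congr rfl (fun r _ => by simp only [InCij]; norm_num; congr)
  have hSE : ((((σ.seCorners.filter (fun c => InCij q c)).filter (fun c => SEInPath c I)).card : ℝ))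
      = ∑ r ∈ Finset.Icc 1 σ.a, (if σ.prof I r = σ.lam r ∧ σ.lam r < σ.prof I (r - 1)
          ∧ ((q.1 ≤ r - 1 ∧ q.2 ≤ σ.lam r) ∨ (r - 1 < q.1 ∧ σ.lam r < q.2)) then (1 : ℝ) else 0) := by
    rw [se_card hconn hI q, Finset.card_filter]
    push_cast
    exact Finset.sum_congr rfl (fun r _ => by simp only [InCij]; norm_num; congr)
  set Hf : ℕ → ℝ := fun r => if (r ≤ q.1 ∧ (q.2 ≤ σ.prof I (r - 1) ∨ ¬σ.prof I (r - 1) = σ.prof I r))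
      ∨ (q.1 < r ∧ q.2 ≤ σ.prof I r ∧ σ.prof I (r - 1) = σ.prof I r) then (1 : ℝ) else 0 with hHf
  have key : ∀ r ∈ Finset.Icc 1 σ.a,
      ((if σ.prof I r < σ.lam r ∧ σ.prof I r < σ.prof I (r - 1)
          ∧ (r ≤ q.1 ∧ σ.prof I r + 1 ≤ q.2) then (1 : ℝ) else 0)
        + (if σ.nu r < σ.prof I r ∧ σ.prof I (r + 1) < σ.prof I r
          ∧ (q.1 ≤ r ∧ q.2 ≤ σ.prof I r) then (1 : ℝ) else 0)
        - (if σ.nu r < σ.prof I r ∧ σ.prof I (r + 1) < σ.prof I r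
          ∧ (r < q.1 ∧ σ.prof I r < q.2) then (1 : ℝ) else 0)
        - (if σ.prof I r < σ.lam r ∧ σ.prof I r < σ.prof I (r - 1)
          ∧ (q.1 < r ∧ q.2 < σ.prof I r + 1) then (1 : ℝ) else 0))
      = ((if σ.prof I r = σ.nu r ∧ σ.prof I (r + 1) < σ.nu r
          ∧ ((q.1 ≤ r ∧ q.2 ≤ σ.nu r) ∨ (r < q.1 ∧ σ.nu r < q.2)) then (1 : ℝ) else 0)
        + (if σ.prof I r = σ.lam r ∧ σ.lam r < σ.prof I (r - 1)
          ∧ ((q.1 ≤ r - 1 ∧ q.2 ≤ σ.lam r) ∨ (r - 1 < q.1 ∧ σ.lam r < q.2)) then (1 : ℝ) else 0))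
        + (Hf r - Hf (r + 1)) := by
    intro r hr
    rw [Finset.mem_Icc] at hr
    have hnup : σ.nu r ≤ σ.prof I r := nu_le_prof hr.1 hr.2
    have hlam : σ.prof I r ≤ σ.lam r := prof_le_lam hI hr.1 hr.2
    have hup : σ.prof I r ≤ σ.prof I (r - 1) := by
      have := prof_succ_le hI (r - 1)
      have he : r - 1 + 1 = r := by omega
      rwa [he] at this
    have hdn : σ.prof I (r + 1) ≤ σ.prof I r := prof_succ_le hI r
    have h5 : r ≤ q.1 → q.2 ≤ σ.lam r := fun h =>
      le_trans hj2 (σ.lam_anti r q.1 hr.1 h hi2)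
    have h6 : q.1 ≤ r → σ.nu r < q.2 := fun h =>
      lt_of_le_of_lt (σ.nu_anti q.1 r hi1 h hr.2) hj1
    have h7 : r = 1 → q.2 ≤ σ.prof I (r - 1) := by
      intro h; subst h
      simp only [Nat.sub_self, prof_zero]
      exact hjb
    simp only [hHf, Nat.add_sub_cancel]
    simp only [iteR]
    exact_mod_cast rowIdZ q.1 q.2 r (σ.nu r) (σ.lam r) (σ.prof I (r - 1)) (σ.prof I r)
      (σ.prof I (r + 1)) hnup hlam hup hdn h5 h6 h7 hr.1
  have htel : ∑ r ∈ Finset.Icc 1 σ.a, (Hf r - Hf (r + 1)) = Hf 1 - Hf (σ.a + 1) :=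
    telescope_real Hf σ.a
  have hH1 : Hf 1 = 1 := by
    rw [hHf]
    simp only
    rw [if_pos]
    left
    refine ⟨hi1, Or.inl ?_⟩
    simp only [Nat.sub_self, prof_zero]
    exact hjb
  have hHa : Hf (σ.a + 1) = 0 := by
    rw [hHf]
    simp only
    rw [if_neg]
    rintro (⟨h1, -⟩ | ⟨-, h2, -⟩)
    · omega
    · rw [prof_of_gt (by omega)] at h2
      omega
  rw [rook, hA, hB, hC, hD, hNW, hSE,
    ← Finset.sum_add_distrib, ← Finset.sum_sub_distrib, ← Finset.sum_sub_distrib,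
    Finset.sum_congr rfl key, Finset.sum_add_distrib, Finset.sum_add_distrib, htel, hH1, hHa]
  ring
end SkewShape
namespace SkewShape

variable {σ : SkewShape}

lemma pr_sum_eq (μ : Finset (ℕ × ℕ) → ℝ) (S : Finset (ℕ × ℕ))
    (E : ℕ × ℕ → Finset (ℕ × ℕ) → Prop) :
    ∑ c ∈ S, σ.pr μ (fun I => E c I)
      = ∑ I ∈ σ.idealsFinset, μ I * ((S.filter (fun c => E c I)).card : ℝ) := by
  unfold pr
  have h1 : ∀ c ∈ S, ∑ I ∈ σ.idealsFinset.filter (fun I => E c I), μ I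
      = ∑ I ∈ σ.idealsFinset, if E c I then μ I else 0 := by
    intro c _
    rw [Finset.sum_filter]
  rw [Finset.sum_congr rfl h1, Finset.sum_comm]
  refine Finset.sum_congr rfl (fun I _ => ?_)
  rw [← Finset.sum_filter, Finset.sum_const, nsmul_eq_mul, mul_comm]

end SkewShape

/-- Lemma 3.8: for a connected skew shape `σ`, any probability
distribution `μ` on `J(σ)` (not necessarily toggle-symmetric) and any box `[i,j]` of `σ`,
`E_μ(R_{ij}) = 1 + Σ_{c ∈ C_{ij}(σ)} P_μ(c)`. -/
theorem SkewShape.rook_expectation_corners (σ : SkewShape) (hconn : σ.Connected)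
    (μ : Finset (ℕ × ℕ) → ℝ) (hμ : σ.IsProbDist μ)
    (q : ℕ × ℕ) (hq : q ∈ σ.cells) :
    σ.expect μ (σ.rook q) =
      1 + ((∑ c ∈ σ.nwCorners.filter (fun c => SkewShape.InCij q c),
              σ.pr μ (SkewShape.NWInPath c)) +
           (∑ c ∈ σ.seCorners.filter (fun c => SkewShape.InCij q c),
              σ.pr μ (SkewShape.SEInPath c))) := by
  have hnw := SkewShape.pr_sum_eq (σ := σ) μ (σ.nwCorners.filter (fun c => SkewShape.InCij q c))
    (fun c I => SkewShape.NWInPath c I)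
  have hse := SkewShape.pr_sum_eq (σ := σ) μ (σ.seCorners.filter (fun c => SkewShape.InCij q c))
    (fun c I => SkewShape.SEInPath c I)
  rw [hnw, hse]
  unfold SkewShape.expect
  have hpt : ∀ I ∈ σ.idealsFinset, μ I * σ.rook q I
      = μ I + (μ I * (((σ.nwCorners.filter (fun c => SkewShape.InCij q c)).filter
            (fun c => SkewShape.NWInPath c I)).card : ℝ)
        + μ I * (((σ.seCorners.filter (fun c => SkewShape.InCij q c)).filter
            (fun c => SkewShape.SEInPath c I)).card : ℝ)) := by
    intro I hI
    have hid : σ.IsIdeal I := (Finset.mem_filter.1 hI).2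
    rw [SkewShape.rook_pointwise hconn hid hq]
    ring
  rw [Finset.sum_congr rfl hpt, Finset.sum_add_distrib, Finset.sum_add_distrib, hμ.2]
end
end

section
/- For any connected skew shape σ with height a and width b, there exist integers r_{ij} ∈ ℤ for each box [i,j] ∈ σ such that for every row index 1 ≤ i ≤ a, the sum Σ_{[i,j'] ∈ σ} r_{i,j'} = b, and for every column index 1 ≤ j ≤ b, the sum Σ_{[i',j] ∈ σ} r_{i',j} = a. -/
open Finset
open scoped Classical

noncomputable section

/-- Connectivity implies consecutive rows overlap: `ν i < λ (i+1)`. -/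
lemma SkewShape.conn_overlap_s13 (σ : SkewShape) (h : σ.Connected) :
    ∀ i, 1 ≤ i → i + 1 ≤ σ.a → σ.nu i < σ.lam (i + 1) := by
  intro i hi1 hia
  by_contra hcon
  push_neg at hcon
  have hnl1 := σ.nu_lt_lam 1 le_rfl σ.ha
  have hnla := σ.nu_lt_lam σ.a σ.ha le_rfl
  have hp : ((1 : ℕ), σ.b) ∈ σ.cells := by
    simp only [SkewShape.cells, mem_filter, mem_product, mem_Icc]
    refine ⟨⟨⟨le_refl _, σ.ha⟩, σ.hb, le_refl _⟩, ?_, ?_⟩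
    · rw [← σ.lam_one]; exact hnl1
    · exact σ.lam_one.ge
  have hq : (σ.a, (1 : ℕ)) ∈ σ.cells := by
    simp only [SkewShape.cells, mem_filter, mem_product, mem_Icc]
    refine ⟨⟨⟨σ.ha, le_refl _⟩, le_refl _, σ.hb⟩, ?_, ?_⟩
    · rw [σ.nu_a]; exact one_pos
    · omega
  have key : ∀ x ∈ σ.cells, ∀ y ∈ σ.cells, x ≤ y → x.1 ≤ i → y.1 ≤ i := by
    rintro ⟨x1, x2⟩ hx ⟨y1, y2⟩ hy hle hxi
    simp only [SkewShape.cells, mem_filter, mem_product, mem_Icc] at hx hy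
    obtain ⟨⟨⟨hx1, hx2⟩, -, -⟩, hx3, hx4⟩ := hx
    obtain ⟨⟨⟨hy1, hy2⟩, -, -⟩, hy3, hy4⟩ := hy
    obtain ⟨h12, h22⟩ := hle
    simp only at h12 h22 hxi ⊢
    by_contra hyi
    push_neg at hyi
    have h1 : σ.nu i ≤ σ.nu x1 := σ.nu_anti x1 i hx1 hxi (by omega)
    have h2 : σ.lam y1 ≤ σ.lam (i + 1) := σ.lam_anti (i + 1) y1 (by omega) hyi hy2
    omega
  obtain ⟨-, hwalk⟩ := h
  have hinv : ∀ p q : ℕ × ℕ,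
      Relation.ReflTransGen
        (fun x y : ℕ × ℕ => x ∈ σ.cells ∧ y ∈ σ.cells ∧ (x ≤ y ∨ y ≤ x)) p q →
      p.1 ≤ i → q.1 ≤ i := by
    intro p q hw'
    induction hw' with
    | refl => exact id
    | tail hab hbc ih =>
      intro hpi
      obtain ⟨hb, hc, hcomp⟩ := hbc
      rcases hcomp with h1 | h1
      · exact key _ hb _ hc h1 (ih hpi)
      · exact le_trans h1.1 (ih hpi)
  have hfin : σ.a ≤ i := hinv _ _ (hwalk _ hp _ hq) hi1
  omega

/-- Auxiliary: integer solutions to the row/column sum system for a connected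
staircase of intervals, with arbitrary consistent targets. -/
lemma aux_rook (a : ℕ) (ha : 1 ≤ a) :
    ∀ (s e : ℕ → ℕ) (R C : ℕ → ℤ),
    (∀ i, 1 ≤ i → i ≤ a → 1 ≤ s i) →
    (∀ i, 1 ≤ i → i ≤ a → s i ≤ e i) →
    (∀ i j, 1 ≤ i → i ≤ j → j ≤ a → s j ≤ s i) →
    (∀ i j, 1 ≤ i → i ≤ j → j ≤ a → e j ≤ e i) →
    (∀ i, 1 ≤ i → i + 1 ≤ a → s i ≤ e (i + 1)) →
    (∑ i ∈ Finset.Icc 1 a, R i = ∑ j ∈ Finset.Icc (s a) (e 1), C j) →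
    ∃ r : ℕ × ℕ → ℤ,
      (∀ i, 1 ≤ i → i ≤ a → ∑ j ∈ Finset.Icc (s i) (e i), r (i, j) = R i) ∧
      (∀ j, s a ≤ j → j ≤ e 1 →
        ∑ i ∈ (Finset.Icc 1 a).filter (fun i => s i ≤ j ∧ j ≤ e i), r (i, j) = C j) := by
  induction a, ha using Nat.le_induction with
  | base =>
    intro s e R C hs1 hse hsa hea hov hsum
    refine ⟨fun p => C p.2, ?_, ?_⟩
    · intro i h1 h2
      have hi : i = 1 := le_antisymm h2 h1
      subst hi
      simpa using hsum.symm
    · intro j hj1 hj2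
      have hfe : (Finset.Icc 1 1).filter (fun i => s i ≤ j ∧ j ≤ e i) = {1} := by
        ext x
        simp only [mem_filter, mem_Icc, mem_singleton]
        constructor
        · rintro ⟨⟨h1, h2⟩, -⟩; omega
        · rintro rfl; exact ⟨⟨le_refl _, le_refl _⟩, hj1, hj2⟩
      rw [hfe, Finset.sum_singleton]
  | succ a ha IH =>
    intro s e R C hs1 hse hsa hea hov hsum
    have hsa_le : s (a + 1) ≤ s a := hsa a (a + 1) ha (by omega) (by omega)
    have hsa1 : 1 ≤ s a := hs1 a ha (by omega)
    have h_sa_e : s a ≤ e (a + 1) := hov a ha (le_refl _)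
    have h_sa_ea : s a ≤ e a := hse a ha (by omega)
    have h_ea_e1 : e a ≤ e 1 := hea 1 a le_rfl ha (by omega)
    have h_sa_e1 : s a ≤ e 1 := le_trans h_sa_ea h_ea_e1
    set L : ℤ := ∑ j ∈ Finset.Ico (s (a + 1)) (s a), C j with hL
    set g : ℕ → ℤ := fun j =>
      if j < s a then C j else if j = s a then R (a + 1) - L else 0 with hg
    set C' : ℕ → ℤ := fun j =>
      if j = s a then C (s a) + L - R (a + 1) else C j with hC'
    -- splitting the big column sum
    have hsplit : L + ∑ j ∈ Finset.Icc (s a) (e 1), C j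
        = ∑ j ∈ Finset.Icc (s (a + 1)) (e 1), C j := by
      rw [← Finset.Ico_add_one_right_eq_Icc (s a) (e 1), ← Finset.Ico_add_one_right_eq_Icc (s (a + 1)) (e 1)]
      exact Finset.sum_Ico_consecutive C hsa_le (by omega)
    have hC'sum : ∑ j ∈ Finset.Icc (s a) (e 1), C' j
        = (∑ j ∈ Finset.Icc (s a) (e 1), C j) + (L - R (a + 1)) := by
      have hpt : ∀ j, C' j = C j + (if j = s a then L - R (a + 1) else 0) := by
        intro j
        by_cases hj : j = s a
        · subst hj; simp [hC']; ring
        · simp [hC', hj]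
      rw [Finset.sum_congr rfl fun j _ => hpt j, Finset.sum_add_distrib,
        Finset.sum_ite_eq' (Finset.Icc (s a) (e 1)) (s a)]
      rw [if_pos (by simp only [mem_Icc]; exact ⟨le_refl _, h_sa_e1⟩)]
    have hRsplit : ∑ i ∈ Finset.Icc 1 (a + 1), R i
        = (∑ i ∈ Finset.Icc 1 a, R i) + R (a + 1) :=
      Finset.sum_Icc_succ_top (by omega) R
    have hsum' : ∑ i ∈ Finset.Icc 1 a, R i = ∑ j ∈ Finset.Icc (s a) (e 1), C' j := by
      rw [hC'sum]
      have h0 := hsum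
      rw [hRsplit, ← hsplit] at h0
      linarith
    obtain ⟨r', hrow', hcol'⟩ := IH s e R C'
      (fun i h1 h2 => hs1 i h1 (by omega))
      (fun i h1 h2 => hse i h1 (by omega))
      (fun i j h1 h2 h3 => hsa i j h1 h2 (by omega))
      (fun i j h1 h2 h3 => hea i j h1 h2 (by omega))
      (fun i h1 h2 => hov i h1 (by omega))
      hsum'
    refine ⟨fun p => if p.1 = a + 1 then g p.2 else r' p, ?_, ?_⟩
    · intro i h1 h2
      by_cases hi : i = a + 1
      · subst hi
        have hpt0 : ∀ j ∈ Finset.Icc (s (a + 1)) (e (a + 1)),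
            (if ((a + 1 : ℕ), j).1 = a + 1 then g ((a + 1 : ℕ), j).2
              else r' (a + 1, j)) = g j := by
          intro j _; simp
        have e1 : ∑ j ∈ Finset.Ico (s (a + 1)) (s a), g j = L := by
          rw [hL]
          refine Finset.sum_congr rfl fun j hj => ?_
          rw [Finset.mem_Ico] at hj
          simp [hg, hj.2]
        have e2 : ∑ j ∈ Finset.Ico (s a) ((e (a + 1)).succ), g j = R (a + 1) - L := by
          have hpt : ∀ j ∈ Finset.Ico (s a) ((e (a + 1)).succ),
              g j = (if j = s a then R (a + 1) - L else 0) := by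
            intro j hj
            rw [Finset.mem_Ico] at hj
            have hnlt : ¬ j < s a := by omega
            simp [hg, hnlt]
          rw [Finset.sum_congr rfl hpt,
            Finset.sum_ite_eq' (Finset.Ico (s a) ((e (a + 1)).succ)) (s a)]
          rw [if_pos (by simp only [Finset.mem_Ico]; omega)]
        have hbig : (∑ j ∈ Finset.Ico (s (a + 1)) (s a), g j)
            + ∑ j ∈ Finset.Ico (s a) ((e (a + 1)).succ), g j
            = ∑ j ∈ Finset.Ico (s (a + 1)) ((e (a + 1)).succ), g j :=
          Finset.sum_Ico_consecutive g hsa_le (Nat.le_succ_of_le h_sa_e)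
        have hicc : ∑ j ∈ Finset.Ico (s (a + 1)) ((e (a + 1)).succ), g j
            = ∑ j ∈ Finset.Icc (s (a + 1)) (e (a + 1)), g j := by
          rw [← Finset.Ico_add_one_right_eq_Icc]; rfl
        rw [Finset.sum_congr rfl hpt0, ← hicc, ← hbig, e1, e2]
        ring
      · have hi' : i ≤ a := by omega
        have hpt0 : ∀ j ∈ Finset.Icc (s i) (e i),
            (if ((i : ℕ), j).1 = a + 1 then g ((i : ℕ), j).2 else r' (i, j))
              = r' (i, j) := by
          intro j _; simp [hi]
        rw [Finset.sum_congr rfl hpt0]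
        exact hrow' i h1 hi'
    · intro j hj1 hj2
      have hIccsplit : Finset.Icc 1 (a + 1) = insert (a + 1) (Finset.Icc 1 a) := by
        ext x; simp only [mem_Icc, Finset.mem_insert]; omega
      have hnot : (a + 1) ∉ (Finset.Icc 1 a).filter (fun i => s i ≤ j ∧ j ≤ e i) := by
        simp only [mem_filter, mem_Icc]; omega
      have hcong : ∀ x ∈ (Finset.Icc 1 a).filter (fun i => s i ≤ j ∧ j ≤ e i),
          (if ((x : ℕ), j).1 = a + 1 then g ((x : ℕ), j).2 else r' (x, j))
            = r' (x, j) := by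
        intro x hx
        rw [mem_filter, mem_Icc] at hx
        have hxne : x ≠ a + 1 := by omega
        simp [hxne]
      rw [hIccsplit, Finset.filter_insert]
      by_cases hPa : s (a + 1) ≤ j ∧ j ≤ e (a + 1)
      · rw [if_pos hPa, Finset.sum_insert hnot, Finset.sum_congr rfl hcong]
        rw [show ((fun p : ℕ × ℕ => if p.1 = a + 1 then g p.2 else r' p) (a + 1, j))
            = g j by simp]
        by_cases hjlt : j < s a
        · have hempty : (Finset.Icc 1 a).filter (fun i => s i ≤ j ∧ j ≤ e i) = ∅ := by
            rw [Finset.filter_eq_empty_iff]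
            intro x hx
            rw [mem_Icc] at hx
            have hxs : s a ≤ s x := hsa x a hx.1 hx.2 (by omega)
            omega
          rw [hempty]
          simp only [Finset.sum_empty, add_zero]
          simp [hg, hjlt]
        · push_neg at hjlt
          rw [hcol' j hjlt hj2]
          by_cases hje : j = s a
          · subst hje
            simp only [hg, hC']
            split_ifs <;> first | ring1 | (exfalso; omega)
          · simp only [hg, hC']
            split_ifs <;> first | ring1 | (exfalso; omega)
      · rw [if_neg hPa, Finset.sum_congr rfl hcong]
        have hjge : s a ≤ j := by
          by_contra hlt
          push_neg at hlt
          exact hPa ⟨hj1, by omega⟩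
        rw [hcol' j hjge hj2]
        have hje : j ≠ s a := by
          intro hj
          exact hPa ⟨by omega, by omega⟩
        simp [hC', hje]

/-- Lemma 3.9: for any connected skew shape `σ` with height `a` and
width `b`, there is a placement of (possibly negatively many) rooks on the boxes of `σ`
such that every row is attacked by exactly `b` rooks and every column by exactly `a`
rooks. -/
theorem SkewShape.rook_placement (σ : SkewShape) (hconn : σ.Connected) :
    ∃ r : ℕ × ℕ → ℤ,
      (∀ i : ℕ, 1 ≤ i → i ≤ σ.a →
        ∑ p ∈ σ.cells.filter (fun p => p.1 = i), r p = (σ.b : ℤ)) ∧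
      (∀ j : ℕ, 1 ≤ j → j ≤ σ.b →
        ∑ p ∈ σ.cells.filter (fun p => p.2 = j), r p = (σ.a : ℤ)) := by
  have hov := σ.conn_overlap_s13 hconn
  have hconsist : ∑ i ∈ Finset.Icc 1 σ.a, (σ.b : ℤ)
      = ∑ j ∈ Finset.Icc (σ.nu σ.a + 1) (σ.lam 1), (σ.a : ℤ) := by
    rw [σ.nu_a, σ.lam_one]
    simp [Nat.card_Icc, mul_comm]
  obtain ⟨r, hrow, hcol⟩ := aux_rook σ.a σ.ha (fun i => σ.nu i + 1) σ.lam
    (fun _ => (σ.b : ℤ)) (fun _ => (σ.a : ℤ))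
    (fun i h1 h2 => by show 1 ≤ σ.nu i + 1; omega)
    (fun i h1 h2 => σ.nu_lt_lam i h1 h2)
    (fun i j h1 h2 h3 => by
      show σ.nu j + 1 ≤ σ.nu i + 1
      have := σ.nu_anti i j h1 h2 h3; omega)
    (fun i j h1 h2 h3 => σ.lam_anti i j h1 h2 h3)
    (fun i h1 h2 => hov i h1 h2)
    hconsist
  refine ⟨r, ?_, ?_⟩
  · intro i h1 h2
    have hb := σ.lam_le_b i h1 h2
    have himg : σ.cells.filter (fun p => p.1 = i)
        = (Finset.Icc (σ.nu i + 1) (σ.lam i)).image (fun j => (i, j)) := by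
      ext ⟨x, y⟩
      simp only [SkewShape.cells, mem_filter, mem_product, mem_Icc, Finset.mem_image,
        Prod.mk.injEq]
      constructor
      · rintro ⟨⟨⟨⟨hx1, hx2⟩, hy1, hy2⟩, hy3, hy4⟩, rfl⟩
        exact ⟨y, ⟨by omega, hy4⟩, rfl, rfl⟩
      · rintro ⟨j, ⟨hj1, hj2⟩, rfl, rfl⟩
        exact ⟨⟨⟨⟨h1, h2⟩, by omega, by omega⟩, by omega, hj2⟩, rfl⟩
    rw [himg, Finset.sum_image (by intro u hu v hv huv; simpa using huv)]
    exact hrow i h1 h2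
  · intro j hj1 hj2
    have himg : σ.cells.filter (fun p => p.2 = j)
        = ((Finset.Icc 1 σ.a).filter
            (fun i => σ.nu i + 1 ≤ j ∧ j ≤ σ.lam i)).image (fun i => (i, j)) := by
      ext ⟨x, y⟩
      simp only [SkewShape.cells, mem_filter, mem_product, mem_Icc, Finset.mem_image,
        Prod.mk.injEq]
      constructor
      · rintro ⟨⟨⟨⟨hx1, hx2⟩, hy1, hy2⟩, hy3, hy4⟩, rfl⟩
        exact ⟨x, ⟨⟨hx1, hx2⟩, by omega, hy4⟩, rfl, rfl⟩
      · rintro ⟨x', ⟨⟨hx1, hx2⟩, hx3, hx4⟩, rfl, rfl⟩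
        exact ⟨⟨⟨⟨hx1, hx2⟩, hj1, hj2⟩, by omega, hx4⟩, rfl⟩
    rw [himg, Finset.sum_image (by intro u hu v hv huv; simpa using huv)]
    have hnu : σ.nu σ.a + 1 ≤ j := by rw [σ.nu_a]; omega
    have hlam : j ≤ σ.lam 1 := by rw [σ.lam_one]; exact hj2
    exact hcol j hnu hlam
end
end
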